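/- arXiv:0712.1532 — 4 statements merged into one kernel-verified Lean document; each statement's English description precedes it below -/
import Mathlib

section
/- Let D be a finite set, n ≥ 2, and let R ⊆ D^n be nonempty and contain no constant tuple, i.e. (d, d, …, d) ∉ R for every d ∈ D. Then some binary relation R' ⊆ D² derivable from R is nonempty and contains no pair of the form (d, d). -/
/-- `Derivable R S` says that the relation `S` belongs to the smallest family of
finitary relations on `D` containing `R` and closed under: permuting coordinates,
identifying the last two coordinates, and projecting away the last coordinate. -/
inductive Derivable {D : Type} {n : ℕ} (R : Set (Fin n → D)) :
    {k : ℕ} → Set (Fin k → D) → Prop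
  | base : Derivable R R
  | perm {k : ℕ} (S : Set (Fin k → D)) (e : Equiv.Perm (Fin k)) :
      Derivable R S → Derivable R {t : Fin k → D | (t ∘ e) ∈ S}
  | identify {k : ℕ} (S : Set (Fin (k + 2) → D)) :
      Derivable R S → Derivable R {t : Fin (k + 1) → D | Fin.snoc t (t (Fin.last k)) ∈ S}
  | project {k : ℕ} (S : Set (Fin (k + 1) → D)) :
      Derivable R S → Derivable R {t : Fin k → D | ∃ y : D, Fin.snoc t y ∈ S}

lemma snoc_const {D : Type} {m : ℕ} (d : D) :
    (Fin.snoc (fun _ : Fin m => d) d) = fun _ : Fin (m + 1) => d := by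
  funext x
  refine Fin.lastCases ?_ ?_ x
  · simp
  · intro i; simp

lemma aux_reduce {D : Type} {n : ℕ} (R : Set (Fin n → D)) :
    ∀ k (T : Set (Fin (k + 2) → D)), Derivable R T → T.Nonempty →
      (∀ d : D, (fun _ => d) ∉ T) →
      ∃ R' : Set (Fin 2 → D), Derivable R R' ∧ R'.Nonempty ∧
        ∀ d : D, (fun _ => d) ∉ R' := by
  intro k
  induction k with
  | zero => intro T hd hne hnc; exact ⟨T, hd, hne, hnc⟩
  | succ k ih =>
    intro T hd hne hnc
    by_cases hc : ∃ t ∈ T, ∃ i j : Fin (k + 3), i ≠ j ∧ t i = t j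
    · obtain ⟨t, ht, i, j, hij, htij⟩ := hc
      set a : Fin (k + 3) := Fin.last (k + 2) with ha
      set b : Fin (k + 3) := (Fin.last (k + 1)).castSucc with hb
      have hab : a ≠ b := by
        simp only [ha, hb]
        exact (Fin.castSucc_lt_last _).ne'
      set τ : Equiv.Perm (Fin (k + 3)) := Equiv.swap a i with hτ
      set j' : Fin (k + 3) := τ.symm j with hj'
      set ρ : Equiv.Perm (Fin (k + 3)) := Equiv.swap b j' with hρ
      set σ : Equiv.Perm (Fin (k + 3)) := ρ.trans τ with hσ
      have hσa : σ a = i := by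
        have haj' : a ≠ j' := by
          intro h
          apply hij
          have : τ a = j := by rw [h, hj', Equiv.apply_symm_apply]
          rw [hτ, Equiv.swap_apply_left] at this
          exact this.symm ▸ rfl
        simp only [hσ, Equiv.trans_apply, hρ]
        rw [Equiv.swap_apply_of_ne_of_ne hab haj', hτ, Equiv.swap_apply_left]
      have hσb : σ b = j := by
        simp only [hσ, Equiv.trans_apply, hρ]
        rw [Equiv.swap_apply_left, hj', Equiv.apply_symm_apply]
      set e : Equiv.Perm (Fin (k + 3)) := σ.symm with he
      -- permuted relation
      have hd1 : Derivable R {s : Fin (k + 3) → D | (s ∘ e) ∈ T} :=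
        Derivable.perm T e hd
      -- identified relation
      set T2 : Set (Fin (k + 2) → D) :=
        {t : Fin (k + 2) → D |
          Fin.snoc t (t (Fin.last (k + 1))) ∈ {s : Fin (k + 3) → D | (s ∘ e) ∈ T}} with hT2
      have hd2 : Derivable R T2 :=
        Derivable.identify _ hd1
      -- nonempty
      set s : Fin (k + 3) → D := t ∘ σ with hs
      have hse : s ∘ e = t := by
        funext x
        simp [hs, he, Function.comp]
      have hsa : s a = s b := by
        simp only [hs, Function.comp_apply, hσa, hσb]
        exact htij
      have hinit : Fin.init s (Fin.last (k + 1)) = s a := by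
        rw [Fin.init]
        simp only [← hb]
        exact hsa.symm
      have hmem : Fin.init s ∈ T2 := by
        have : Fin.snoc (Fin.init s) (Fin.init s (Fin.last (k + 1))) = s := by
          rw [hinit, ha, Fin.snoc_init_self]
        simp only [hT2, Set.mem_setOf_eq, this, hse]
        exact ht
      have hT2nc : ∀ d : D, (fun _ => d) ∉ T2 := by
        intro d hdT
        simp only [hT2, Set.mem_setOf_eq] at hdT
        rw [snoc_const] at hdT
        have : ((fun _ : Fin (k + 3) => d) ∘ e) = fun _ => d := rfl
        rw [this] at hdT
        exact hnc d hdT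
      exact ih T2 hd2 ⟨Fin.init s, hmem⟩ hT2nc
    · push_neg at hc
      set P : Set (Fin (k + 2) → D) := {t : Fin (k + 2) → D | ∃ y : D, Fin.snoc t y ∈ T}
        with hP
      have hdP : Derivable R P := Derivable.project T hd
      obtain ⟨t, ht⟩ := hne
      have hmem : Fin.init t ∈ P := ⟨t (Fin.last (k + 2)), by rw [Fin.snoc_init_self]; exact ht⟩
      have hPnc : ∀ d : D, (fun _ => d) ∉ P := by
        intro d hdP'
        obtain ⟨y, hy⟩ := hdP'
        have h0 : (Fin.snoc (fun _ : Fin (k + 2) => d) y : Fin (k + 3) → D) ((0 : Fin (k + 2)).castSucc) = d := by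
          rw [Fin.snoc_castSucc]
        have h1 : (Fin.snoc (fun _ : Fin (k + 2) => d) y : Fin (k + 3) → D) ((1 : Fin (k + 2)).castSucc) = d := by
          rw [Fin.snoc_castSucc]
        have := hc _ hy ((0 : Fin (k + 2)).castSucc) ((1 : Fin (k + 2)).castSucc)
          (by
            intro h
            have h01 : (0 : Fin (k + 2)) = 1 := Fin.castSucc_injective _ h
            exact absurd (congrArg Fin.val h01) (by simp))
        exact this (h0.trans h1.symm)
      exact ih P hdP ⟨Fin.init t, hmem⟩ hPnc

/-- If `R ⊆ D^n` (`n ≥ 2`) is nonempty and contains no constant tuple, then some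
binary relation derivable from `R` is nonempty and contains no pair `(d, d)`. -/
theorem stmt_2 {D : Type} [Fintype D] {n : ℕ} (hn : 2 ≤ n)
    (R : Set (Fin n → D)) (hne : R.Nonempty)
    (hnc : ∀ d : D, (fun _ => d) ∉ R) :
    ∃ R' : Set (Fin 2 → D), Derivable R R' ∧ R'.Nonempty ∧
      ∀ d : D, (fun _ => d) ∉ R' := by
  obtain ⟨k, rfl⟩ : ∃ k, n = k + 2 := ⟨n - 2, by omega⟩
  exact aux_reduce R k R Derivable.base hne hnc
end

section
/- Let L be a finite lattice with order ⊑ on a set D, let n ≥ 1, and let f : D^n → {0,1} be a generalised 2-monotone predicate on L. Then f is supermodular on L, that is, f(a) + f(b) ≤ f(a ⊓ b) + f(a ⊔ b) for all a, b ∈ D^n, where meet and join are taken componentwise. -/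
/-- One disjunct of a generalised 2-monotone formula: either it is omitted
(`none`, which holds for no tuple), or it is given by an index set `I` together
with constants `a i`, and holds for `x` iff `cmp (x i) (a i)` for all `i ∈ I`. -/
def disjHolds {D : Type} {n : ℕ} (cmp : D → D → Prop)
    (o : Option (Finset (Fin n) × (Fin n → D))) (x : Fin n → D) : Prop :=
  match o with
  | none => False
  | some (I, a) => ∀ i ∈ I, cmp (x i) (a i)

lemma disjHolds_le_mono {D : Type} [Lattice D] {n : ℕ}
    (o : Option (Finset (Fin n) × (Fin n → D))) {x y : Fin n → D} (hxy : x ≤ y)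
    (h : disjHolds (fun u v => u ≤ v) o y) : disjHolds (fun u v => u ≤ v) o x := by
  cases o with
  | none => exact h
  | some p => exact fun i hi => le_trans (hxy i) (h i hi)

lemma disjHolds_ge_mono {D : Type} [Lattice D] {n : ℕ}
    (o : Option (Finset (Fin n) × (Fin n → D))) {x y : Fin n → D} (hxy : x ≤ y)
    (h : disjHolds (fun u v => v ≤ u) o x) : disjHolds (fun u v => v ≤ u) o y := by
  cases o with
  | none => exact h
  | some p => exact fun i hi => le_trans (h i hi) (hxy i)

/-- A generalised 2-monotone predicate (with values in `{0,1} ⊆ ℝ`) on a finite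
lattice is supermodular: `f a + f b ≤ f (a ⊓ b) + f (a ⊔ b)` with componentwise
meet and join. -/
theorem stmt_3 {D : Type} [Lattice D] [Fintype D] {n : ℕ} (hn : 1 ≤ n)
    (f : (Fin n → D) → ℝ) (h01 : ∀ x, f x = 0 ∨ f x = 1)
    (hmon : ∃ o₁ o₂ : Option (Finset (Fin n) × (Fin n → D)),
      ∀ x, f x = 1 ↔
        (disjHolds (fun u v => u ≤ v) o₁ x ∨ disjHolds (fun u v => v ≤ u) o₂ x)) :
    ∀ a b : Fin n → D, f a + f b ≤ f (a ⊓ b) + f (a ⊔ b) := by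
  obtain ⟨o₁, o₂, hf⟩ := hmon
  intro a b
  have hnn : ∀ x, 0 ≤ f x := fun x => by rcases h01 x with h | h <;> simp [h]
  have hle1 : ∀ x, f x ≤ 1 := fun x => by rcases h01 x with h | h <;> simp [h]
  -- if x satisfies a disjunct then f of meet/join is 1
  have key : ∀ x : Fin n → D,
      (disjHolds (fun u v => u ≤ v) o₁ x ∨ disjHolds (fun u v => v ≤ u) o₂ x) →
      f (a ⊓ b) = 1 ∨ f (a ⊔ b) = 1 → True := fun _ _ _ => trivial
  rcases h01 a with ha | ha
  · rcases h01 b with hb | hb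
    · rw [ha, hb]; have := hnn (a ⊓ b); have := hnn (a ⊔ b); linarith
    · -- f b = 1
      rcases (hf b).mp hb with h1 | h2
      · have : f (a ⊓ b) = 1 := (hf _).mpr (Or.inl (disjHolds_le_mono o₁ inf_le_right h1))
        rw [ha, hb, this]; have := hnn (a ⊔ b); linarith
      · have : f (a ⊔ b) = 1 := (hf _).mpr (Or.inr (disjHolds_ge_mono o₂ le_sup_right h2))
        rw [ha, hb, this]; have := hnn (a ⊓ b); linarith
  · rcases h01 b with hb | hb
    · rcases (hf a).mp ha with h1 | h2
      · have : f (a ⊓ b) = 1 := (hf _).mpr (Or.inl (disjHolds_le_mono o₁ inf_le_left h1))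
        rw [ha, hb, this]; have := hnn (a ⊔ b); linarith
      · have : f (a ⊔ b) = 1 := (hf _).mpr (Or.inr (disjHolds_ge_mono o₂ le_sup_left h2))
        rw [ha, hb, this]; have := hnn (a ⊓ b); linarith
    · -- both 1
      have hmeet : f (a ⊓ b) = 1 := by
        rcases (hf a).mp ha with h1 | h2
        · exact (hf _).mpr (Or.inl (disjHolds_le_mono o₁ inf_le_left h1))
        · rcases (hf b).mp hb with h1' | h2'
          · exact (hf _).mpr (Or.inl (disjHolds_le_mono o₁ inf_le_right h1'))
          · -- both satisfy ≥ disjunct: meet satisfies too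
            apply (hf _).mpr
            right
            cases o₂ with
            | none => exact h2
            | some p => exact fun i hi => le_inf (h2 i hi) (h2' i hi)
      have hjoin : f (a ⊔ b) = 1 := by
        rcases (hf a).mp ha with h1 | h2
        · rcases (hf b).mp hb with h1' | h2'
          · apply (hf _).mpr
            left
            cases o₁ with
            | none => exact h1
            | some p => exact fun i hi => sup_le (h1 i hi) (h1' i hi)
          · exact (hf _).mpr (Or.inr (disjHolds_ge_mono o₂ le_sup_right h2'))
        · exact (hf _).mpr (Or.inr (disjHolds_ge_mono o₂ le_sup_left h2))
      rw [ha, hb, hmeet, hjoin]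
end

section
/- Let G = (V, E) be a finite vertex-transitive digraph, let r be a retraction of G with image W, and let H = (W, E ∩ (W × W)) be the induced subdigraph on W. If H is a core, then H is vertex-transitive. -/
/-- `f` is an endomorphism of the digraph with edge relation `E`. -/
def IsEndo {V : Type} (E : V → V → Prop) (f : V → V) : Prop :=
  ∀ x y, E x y → E (f x) (f y)

/-- `g` is an automorphism of the digraph with edge relation `E`: a bijective
endomorphism whose inverse is also an endomorphism (equivalently, a bijection
preserving and reflecting edges). -/
def IsAuto {V : Type} (E : V → V → Prop) (g : V → V) : Prop :=
  Function.Bijective g ∧ ∀ x y, E x y ↔ E (g x) (g y)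

/-- The digraph with edge relation `E` is vertex-transitive. -/
def VertexTransitive {V : Type} (E : V → V → Prop) : Prop :=
  ∀ u v : V, ∃ g : V → V, IsAuto E g ∧ g u = v

lemma isEndo_iterate {V : Type} (E : V → V → Prop) (f : V → V) (hf : IsEndo E f) :
    ∀ n, IsEndo E (f^[n]) := by
  intro n
  induction n with
  | zero => intro x y h; simpa using h
  | succ n ih =>
      intro x y h
      rw [Function.iterate_succ_apply', Function.iterate_succ_apply']
      exact hf _ _ (ih _ _ h)

/-- If `G` is a finite vertex-transitive digraph, `r` a retraction of `G` with image
`W`, and the induced subdigraph `H` on `W` is a core, then `H` is vertex-transitive. -/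
theorem stmt_7 {V : Type} [Fintype V] (E : V → V → Prop)
    (hG : VertexTransitive E) (r : V → V) (hr : IsEndo E r) (hrr : r ∘ r = r)
    (hcore : ∀ s : Set.range r → Set.range r,
      IsEndo (fun u v : Set.range r => E u v) s → s ∘ s = s → s = id) :
    VertexTransitive (fun u v : Set.range r => E u v) := by
  set E' : Set.range r → Set.range r → Prop := fun u v => E u v with hE'
  have hfix : ∀ w : Set.range r, r (w : V) = (w : V) := by
    rintro ⟨w, x, rfl⟩
    exact congrFun hrr x
  intro u v
  obtain ⟨g, hg, hgu⟩ := hG (u : V) (v : V)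
  set f : Set.range r → Set.range r := fun w => ⟨r (g (w : V)), Set.mem_range_self _⟩ with hf
  have hfE : IsEndo E' f := by
    intro x y h
    exact hr _ _ ((hg.2 _ _).mp h)
  have hfu : f u = v := by
    apply Subtype.ext
    simp only [hf, hgu]
    exact hfix v
  -- find N ≥ 1 with f^[N] idempotent
  obtain ⟨a, b, hab, heq⟩ := Finite.exists_ne_map_eq_of_infinite (fun n : ℕ => f^[n])
  wlog hlt : a < b generalizing a b
  · exact this b a hab.symm heq.symm (by omega)
  obtain ⟨k, hk1, rfl⟩ : ∃ k, 1 ≤ k ∧ b = a + k := ⟨b - a, by omega, by omega⟩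
  set m := a with hm
  have step : ∀ n, m ≤ n → f^[n + k] = f^[n] := by
    intro n hn
    have h1 : n + k = (n - m) + (m + k) := by omega
    have h2 : n = (n - m) + m := by omega
    rw [h1, Function.iterate_add, ← heq, ← Function.iterate_add, ← h2]
  have stepj : ∀ j n, m ≤ n → f^[n + j * k] = f^[n] := by
    intro j
    induction j with
    | zero => simp
    | succ j ih =>
        intro n hn
        have : n + (j + 1) * k = (n + k) + j * k := by ring
        rw [this, ih _ (by omega), step _ hn]
  set N := (m + 1) * k with hN
  have hNm : m ≤ N := by show m ≤ (m+1)*k; nlinarith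
  have hN1 : 1 ≤ N := by show 1 ≤ (m+1)*k; nlinarith
  have hidem : f^[N] ∘ f^[N] = f^[N] := by
    rw [← Function.iterate_add]
    have : N + N = N + (m + 1) * k := by omega
    rw [this, stepj _ _ hNm]
  have hid : f^[N] = id := hcore _ (isEndo_iterate _ _ hfE N) hidem
  obtain ⟨p, hp⟩ : ∃ p, N = p + 1 := ⟨N - 1, by omega⟩
  rw [hp] at hid
  have hinv1 : f^[p] ∘ f = id := (Function.iterate_succ f p).symm.trans hid
  have hinv2 : f ∘ f^[p] = id := (Function.iterate_succ' f p).symm.trans hid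
  refine ⟨f, ⟨⟨Function.LeftInverse.injective (g := f^[p]) (congrFun hinv1),
      Function.RightInverse.surjective (g := f^[p]) (congrFun hinv2)⟩, ?_⟩, hfu⟩
  intro x y
  constructor
  · exact hfE x y
  · intro h
    have h2 := isEndo_iterate _ _ hfE p _ _ h
    have e : ∀ z, f^[p] (f z) = z := fun z => congrFun hinv1 z
    rwa [e, e] at h2
end

section
/- Let H = (D, E) be a finite core digraph with vertex set D = {1, …, p}, let Ω be the orbit of the vertex 1 under Aut(H), and let Ω⁺ = {y ∈ D : (w, y) ∈ E for some w ∈ Ω}. For x ∈ D define M(x) as the maximum, over all tuples z = (z_1, …, z_p) ∈ D^p, of the quantity [ (z_1, x) ∈ E ] + Σ_{(i,j) ∈ E} [ (z_i, z_j) ∈ E ], where [P] denotes 1 if P holds and 0 otherwise. Then M(x) = |E| + 1 if x ∈ Ω⁺, and M(x) = |E| otherwise. -/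
lemma exists_idem_iterate {D : Type} [Fintype D] (z : D → D) :
    ∃ k, 0 < k ∧ z^[k] ∘ z^[k] = z^[k] := by
  obtain ⟨a, b, hne, hab⟩ :=
    Finite.exists_ne_map_eq_of_infinite (fun n : ℕ => z^[n])
  replace hab : z^[a] = z^[b] := hab
  wlog h : a < b generalizing a b
  · exact this b a hne.symm hab.symm (by omega)
  have step : ∀ j, a ≤ j → z^[j + (b - a)] = z^[j] := by
    intro j hj
    rw [show j + (b - a) = (j - a) + b by omega, Function.iterate_add, ← hab,
      ← Function.iterate_add, show j - a + a = j by omega]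
  have hdpos : 0 < b - a := by omega
  have key : ∀ t, z^[(a+1)*(b-a) + t*(b-a)] = z^[(a+1)*(b-a)] := by
    intro t
    induction t with
    | zero => simp
    | succ t ih =>
        rw [show (a+1)*(b-a) + (t+1)*(b-a) = ((a+1)*(b-a) + t*(b-a)) + (b-a) by ring,
          step _ (by nlinarith), ih]
  refine ⟨(a+1)*(b-a), by positivity, ?_⟩
  rw [← Function.iterate_add]
  exact key (a+1)

lemma isEndo_iterate_s13 {D : Type} (E : D → D → Prop) (z : D → D) (h : IsEndo E z) :
    ∀ k, IsEndo E z^[k] := by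
  intro k
  induction k with
  | zero => intro a b hab; simpa using hab
  | succ k ih =>
      intro a b hab
      rw [Function.iterate_succ', Function.comp_apply, Function.comp_apply]
      exact h _ _ (ih a b hab)

lemma endo_isAuto {D : Type} [Fintype D] (E : D → D → Prop)
    (hcore : ∀ r : D → D, IsEndo E r → r ∘ r = r → r = id)
    (z : D → D) (hz : IsEndo E z) : IsAuto E z := by
  obtain ⟨k, hk, hidem⟩ := exists_idem_iterate z
  have hid : z^[k] = id := hcore _ (isEndo_iterate_s13 E z hz k) hidem
  obtain ⟨k, rfl⟩ : ∃ m, k = m + 1 := ⟨k - 1, by omega⟩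
  have h1 : z^[k] ∘ z = id := by rw [← Function.iterate_succ]; exact hid
  have h2 : z ∘ z^[k] = id := by rw [← Function.iterate_succ']; exact hid
  refine ⟨⟨Function.LeftInverse.injective (g := z^[k]) fun a => congrFun h1 a,
    Function.RightInverse.surjective (g := z^[k]) fun a => congrFun h2 a⟩, ?_⟩
  intro a b
  constructor
  · exact hz a b
  · intro h
    have h3 := isEndo_iterate_s13 E z hz k _ _ h
    rw [← Function.iterate_succ_apply, ← Function.iterate_succ_apply, hid] at h3
    exact h3

open Classical in
/-- Let `H = (D, E)` be a finite core digraph with a distinguished vertex `v₀`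
(the vertex `1`), let `Ω` be the orbit of `v₀` under `Aut(H)` and
`Ω⁺ = {y | ∃ w ∈ Ω, (w, y) ∈ E}`.  For `x ∈ D`, the maximum over tuples
`z : D → D` of `[(z v₀, x) ∈ E] + #{(i,j) ∈ E | (z i, z j) ∈ E}` equals
`|E| + 1` if `x ∈ Ω⁺` and `|E|` otherwise. -/
theorem stmt_13 {D : Type} [Fintype D] (E : D → D → Prop) (v₀ : D)
    (hcore : ∀ r : D → D, IsEndo E r → r ∘ r = r → r = id) (x : D) :
    IsGreatest
      {c : ℕ | ∃ z : D → D,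
        c = (if E (z v₀) x then 1 else 0) +
            {p : D × D | E p.1 p.2 ∧ E (z p.1) (z p.2)}.ncard}
      (if x ∈ {y | ∃ w ∈ {y' | ∃ g : D → D, IsAuto E g ∧ g v₀ = y'}, E w y}
        then {p : D × D | E p.1 p.2}.ncard + 1
        else {p : D × D | E p.1 p.2}.ncard) := by
  classical
  constructor
  · by_cases hx : x ∈ {y | ∃ w ∈ {y' | ∃ g : D → D, IsAuto E g ∧ g v₀ = y'}, E w y}
    · rw [if_pos hx]
      obtain ⟨w, ⟨g, hg, rfl⟩, hE⟩ := hx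
      refine ⟨g, ?_⟩
      rw [if_pos hE]
      have hset : {p : D × D | E p.1 p.2 ∧ E (g p.1) (g p.2)} = {p : D × D | E p.1 p.2} := by
        ext p
        simp only [Set.mem_setOf_eq]
        exact ⟨fun h => h.1, fun h => ⟨h, (hg.2 _ _).mp h⟩⟩
      rw [hset]
      omega
    · rw [if_neg hx]
      refine ⟨id, ?_⟩
      have hEx : ¬ E (id v₀) x := fun h =>
        hx ⟨v₀, ⟨id, ⟨Function.bijective_id, fun _ _ => Iff.rfl⟩, rfl⟩, h⟩
      rw [if_neg hEx]
      simp
  · rintro c ⟨z, rfl⟩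
    have hsub : {p : D × D | E p.1 p.2 ∧ E (z p.1) (z p.2)} ⊆ {p : D × D | E p.1 p.2} :=
      fun p hp => hp.1
    have hle : {p : D × D | E p.1 p.2 ∧ E (z p.1) (z p.2)}.ncard ≤
        {p : D × D | E p.1 p.2}.ncard := Set.ncard_le_ncard hsub (Set.toFinite _)
    by_cases hEz : E (z v₀) x
    · rw [if_pos hEz]
      by_cases hx : x ∈ {y | ∃ w ∈ {y' | ∃ g : D → D, IsAuto E g ∧ g v₀ = y'}, E w y}
      · rw [if_pos hx]; omega
      · rw [if_neg hx]
        have hne : {p : D × D | E p.1 p.2 ∧ E (z p.1) (z p.2)} ≠ {p : D × D | E p.1 p.2} := by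
          intro heq
          have hzendo : IsEndo E z := by
            intro a b hab
            have : (a, b) ∈ {p : D × D | E p.1 p.2 ∧ E (z p.1) (z p.2)} := by
              rw [heq]; exact hab
            exact this.2
          exact hx ⟨z v₀, ⟨z, endo_isAuto E hcore z hzendo, rfl⟩, hEz⟩
        have hlt : {p : D × D | E p.1 p.2 ∧ E (z p.1) (z p.2)}.ncard <
            {p : D × D | E p.1 p.2}.ncard := by
          refine lt_of_le_of_ne hle fun h => hne ?_
          exact Set.eq_of_subset_of_ncard_le hsub h.ge (Set.toFinite _)
        omega
    · rw [if_neg hEz]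
      split_ifs <;> omega
end
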